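/- Let p > 2 be a real number, n ≥ 1, and let w₁, …, w_n ≥ 0, a₁, …, a_n ∈ ℝ with |aᵢ| ≤ k for all i, and c_{ij} ∈ ℝ for i ≠ j. Then (4/n²)ΣᵢΣ_{j≠i} wᵢ aᵢ wⱼ aⱼ c_{ij} ≤ 4k²·[(1/n)Σᵢ wᵢ^p]^{2/p}·[(1/n²)ΣᵢΣ_{j≠i} |c_{ij}|^{p/(p−2)}]^{(p−2)/p}. -/

import Mathlib

open Finset

/-- Hölder-type inequality used to bound the design-dependence term of the variance of the
Horvitz–Thompson estimator without positivity: for `p > 2`, nonnegative weights `wᵢ`,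
values `aᵢ` with `|aᵢ| ≤ k`, and arbitrary `c_{ij}`,
`(4/n²)ΣᵢΣ_{j≠i} wᵢaᵢwⱼaⱼc_{ij}
  ≤ 4k²·[(1/n)Σᵢ wᵢ^p]^{2/p}·[(1/n²)ΣᵢΣ_{j≠i}|c_{ij}|^{p/(p−2)}]^{(p−2)/p}`. -/
theorem holder_design_dependence_bound
    (p : ℝ) (hp : 2 < p) (n : ℕ) (hn : 1 ≤ n)
    (w : Fin n → ℝ) (hw : ∀ i, 0 ≤ w i)
    (k : ℝ) (a : Fin n → ℝ) (ha : ∀ i, |a i| ≤ k)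
    (c : Fin n → Fin n → ℝ) :
    (4 / (n : ℝ) ^ 2) * ∑ i, ∑ j ∈ Finset.univ.erase i, w i * a i * w j * a j * c i j
      ≤ 4 * k ^ 2 * ((1 / (n : ℝ)) * ∑ i, w i ^ p) ^ (2 / p)
          * ((1 / (n : ℝ) ^ 2) * ∑ i, ∑ j ∈ Finset.univ.erase i,
              |c i j| ^ (p / (p - 2))) ^ ((p - 2) / p) := by
  have hN : (0:ℝ) < n := by exact_mod_cast hn
  have hp0 : (0:ℝ) < p := by linarith
  have hp2 : (0:ℝ) < p - 2 := by linarith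
  have hk : 0 ≤ k := le_trans (abs_nonneg _) (ha ⟨0, hn⟩)
  set q : ℝ := p / (p - 2) with hq
  have hpq : (p/2).HolderConjugate q := by
    rw [Real.holderConjugate_iff]
    constructor
    · linarith
    · rw [hq, inv_div, inv_div, ← add_div,
        show (2:ℝ) + (p - 2) = p by ring, div_self hp0.ne']
  set S : Finset ((_ : Fin n) × Fin n) := Finset.univ.sigma (fun i => Finset.univ.erase i)
    with hS
  have hsig : ∀ f : Fin n → Fin n → ℝ,
      ∑ x ∈ S, f x.1 x.2 = ∑ i, ∑ j ∈ Finset.univ.erase i, f i j := by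
    intro f
    rw [hS, Finset.sum_sigma]
  set W : ℝ := ∑ i, w i ^ p with hW
  have hWnn : 0 ≤ W := Finset.sum_nonneg fun i _ => Real.rpow_nonneg (hw i) _
  set C : ℝ := ∑ i, ∑ j ∈ Finset.univ.erase i, |c i j| ^ q with hC
  have hCnn : 0 ≤ C :=
    Finset.sum_nonneg fun i _ => Finset.sum_nonneg fun j _ => Real.rpow_nonneg (abs_nonneg _) _
  have hCeq : ∑ x ∈ S, |c x.1 x.2| ^ q = C := hsig fun i j => |c i j| ^ q
  have hTeq : ∑ i, ∑ j ∈ Finset.univ.erase i, w i * a i * w j * a j * c i j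
      = ∑ x ∈ S, w x.1 * a x.1 * w x.2 * a x.2 * c x.1 x.2 :=
    (hsig fun i j => w i * a i * w j * a j * c i j).symm
  -- step 1: termwise bound
  have step1 : ∑ x ∈ S, w x.1 * a x.1 * w x.2 * a x.2 * c x.1 x.2
      ≤ k ^ 2 * ∑ x ∈ S, (w x.1 * w x.2) * |c x.1 x.2| := by
    rw [Finset.mul_sum]
    refine Finset.sum_le_sum fun x _ => ?_
    obtain ⟨i, j⟩ := x
    calc w i * a i * w j * a j * c i j ≤ |w i * a i * w j * a j * c i j| := le_abs_self _
      _ = w i * w j * (|a i| * |a j|) * |c i j| := by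
          rw [abs_mul, abs_mul, abs_mul, abs_mul, abs_of_nonneg (hw i), abs_of_nonneg (hw j)]
          ring
      _ ≤ w i * w j * (k * k) * |c i j| :=
          mul_le_mul_of_nonneg_right
            (mul_le_mul_of_nonneg_left (mul_le_mul (ha i) (ha j) (abs_nonneg _) hk)
              (mul_nonneg (hw i) (hw j)))
            (abs_nonneg _)
      _ = k ^ 2 * (w i * w j * |c i j|) := by ring
  -- step 2: Hoelder
  have step2 : ∑ x ∈ S, (w x.1 * w x.2) * |c x.1 x.2|
      ≤ (∑ x ∈ S, (w x.1 * w x.2) ^ (p/2)) ^ (2/p) * C ^ ((p-2)/p) := by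
    have h := Real.inner_le_Lp_mul_Lq_of_nonneg (s := S) hpq
      (f := fun x => w x.1 * w x.2) (g := fun x => |c x.1 x.2|)
      (fun x _ => mul_nonneg (hw _) (hw _)) (fun x _ => abs_nonneg _)
    rw [one_div_div, hq, one_div_div, hCeq] at h
    exact h
  -- step 3: bound the weight sum
  have step3 : ∑ x ∈ S, (w x.1 * w x.2) ^ (p/2) ≤ (n : ℝ) * W := by
    have h1 : ∑ x ∈ S, (w x.1 * w x.2) ^ (p/2)
        ≤ ∑ x ∈ (Finset.univ : Finset ((_ : Fin n) × Fin n)), (w x.1 * w x.2) ^ (p/2) := by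
      refine Finset.sum_le_sum_of_subset_of_nonneg (Finset.subset_univ _) ?_
      exact fun x _ _ => Real.rpow_nonneg (mul_nonneg (hw _) (hw _)) _
    have h2 : ∑ x ∈ (Finset.univ : Finset ((_ : Fin n) × Fin n)), (w x.1 * w x.2) ^ (p/2)
        = (∑ i, w i ^ (p/2)) ^ 2 := by
      rw [sq, Finset.sum_mul_sum, ← Finset.univ_sigma_univ, Finset.sum_sigma]
      exact Finset.sum_congr rfl fun i _ => Finset.sum_congr rfl fun j _ =>
        Real.mul_rpow (hw i) (hw j)
    have h5 : ∀ i : Fin n, ((w i ^ (p/2) : ℝ))^2 = w i ^ p := by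
      intro i
      rw [← Real.rpow_natCast (w i ^ (p/2)) 2, ← Real.rpow_mul (hw i)]
      norm_num
    have h6 : ∑ i, (w i ^ (p/2))^2 = W := Finset.sum_congr rfl fun i _ => h5 i
    have h4 := sq_sum_le_card_mul_sum_sq (s := (Finset.univ : Finset (Fin n)))
      (f := fun i => w i ^ (p/2))
    rw [h6, Finset.card_univ, Fintype.card_fin] at h4
    calc ∑ x ∈ S, (w x.1 * w x.2) ^ (p/2) ≤ (∑ i, w i ^ (p/2)) ^ 2 := h2 ▸ h1
      _ ≤ (n : ℝ) * W := h4
  -- combine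
  have hsumnn : 0 ≤ ∑ x ∈ S, (w x.1 * w x.2) ^ (p/2) :=
    Finset.sum_nonneg fun x _ => Real.rpow_nonneg (mul_nonneg (hw _) (hw _)) _
  have key : ∑ x ∈ S, w x.1 * a x.1 * w x.2 * a x.2 * c x.1 x.2
      ≤ k ^ 2 * (((n:ℝ) * W) ^ (2/p) * C ^ ((p-2)/p)) := by
    refine step1.trans (mul_le_mul_of_nonneg_left (step2.trans ?_) (by positivity))
    exact mul_le_mul_of_nonneg_right
      (Real.rpow_le_rpow hsumnn step3 (by positivity))
      (Real.rpow_nonneg hCnn _)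
  rw [hTeq]
  calc (4 / (n : ℝ) ^ 2) * ∑ x ∈ S, w x.1 * a x.1 * w x.2 * a x.2 * c x.1 x.2
      ≤ (4 / (n : ℝ) ^ 2) * (k ^ 2 * (((n:ℝ) * W) ^ (2/p) * C ^ ((p-2)/p))) :=
        mul_le_mul_of_nonneg_left key (by positivity)
    _ = 4 * k ^ 2 * ((1 / (n : ℝ)) * W) ^ (2/p) * ((1 / (n : ℝ) ^ 2) * C) ^ ((p-2)/p) := by
        rw [Real.mul_rpow (by positivity) hWnn, Real.mul_rpow (by positivity) hWnn,
          Real.mul_rpow (by positivity) hCnn]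
        have e1 : ((1:ℝ) / n) ^ (2/p) = (n:ℝ) ^ (-(2/p)) := by
          rw [one_div, ← Real.rpow_neg_one, ← Real.rpow_mul hN.le]
          norm_num
        have e2 : ((1:ℝ) / (n:ℝ)^2) ^ ((p-2)/p) = (n:ℝ) ^ (-(2*((p-2)/p))) := by
          rw [one_div, ← Real.rpow_natCast (n:ℝ) 2, ← Real.rpow_neg hN.le,
            ← Real.rpow_mul hN.le]
          norm_num
        have e3 : (4 / (n : ℝ) ^ 2) = 4 * (n:ℝ) ^ (-2 : ℝ) := by
          rw [Real.rpow_neg hN.le, ← Real.rpow_natCast (n:ℝ) 2]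
          push_cast
          ring
        have e4 : (n:ℝ) ^ (-2:ℝ) * (n:ℝ) ^ (2/p)
            = (n:ℝ) ^ (-(2/p)) * (n:ℝ) ^ (-(2*((p-2)/p))) := by
          rw [← Real.rpow_add hN, ← Real.rpow_add hN]
          congr 1
          field_simp
          ring
        rw [e1, e2, e3]
        calc 4 * (n:ℝ) ^ (-2:ℝ) * (k ^ 2 * ((n:ℝ) ^ (2/p) * W ^ (2/p) * C ^ ((p-2)/p)))
            = 4 * k ^ 2 * ((n:ℝ) ^ (-2:ℝ) * (n:ℝ) ^ (2/p)) * W ^ (2/p) * C ^ ((p-2)/p) := by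
              ring
          _ = 4 * k ^ 2 * ((n:ℝ) ^ (-(2/p)) * (n:ℝ) ^ (-(2*((p-2)/p)))) * W ^ (2/p)
                * C ^ ((p-2)/p) := by rw [e4]
          _ = 4 * k ^ 2 * ((n:ℝ) ^ (-(2/p)) * W ^ (2/p))
                * ((n:ℝ) ^ (-(2*((p-2)/p))) * C ^ ((p-2)/p)) := by ring
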